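/- Under the hypotheses of the inertial algorithm (g differentiable with L-Lipschitz gradient, bounded below, β ∈ (0,1), α > 0, 0 < s < 2(1-β)/L), there exists N ∈ ℕ and δ_n > 0 (n ≥ N) such that the sequence (g(y_n) + δ_n‖x_n - x_{n-1}‖²)_{n ≥ N} is nonincreasing and convergent. -/

import Mathlib

open Filter Topology

local notation "⟪" x ", " y "⟫" => @inner ℝ _ _ x y

lemma my_quad_bound (A B C nd nd' w : ℝ) (hA : 0 < A) (hquad : B ^ 2 ≤ 4 * A * C)
    (hnd : 0 ≤ nd) (hnd' : 0 ≤ nd') (hw1 : w ≤ nd * nd') (hw2 : -(nd * nd') ≤ w) :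
    B * w ≤ A * nd' ^ 2 + C * nd ^ 2 := by
  have hq := mul_le_mul_of_nonneg_right hquad (sq_nonneg nd)
  rcases le_or_gt 0 B with hB | hB
  · have h := mul_le_mul_of_nonneg_left hw1 hB
    nlinarith [sq_nonneg (2 * A * nd' - B * nd), hA]
  · have h := mul_le_mul_of_nonneg_left hw2 (neg_nonneg.2 hB.le)
    nlinarith [sq_nonneg (2 * A * nd' + B * nd), hA]

lemma my_real_step (L s δ b₁ b₂ gy1 gy2 ig ny r1 r2 w : ℝ)
    (hs : 0 < s)
    (hdes : gy2 ≤ gy1 + ig + L / 2 * ny ^ 2)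
    (hinner : s * ig = b₁ * (2 + b₂) * w - b₁ ^ 2 * r1 ^ 2 - (1 + b₂) * r2 ^ 2)
    (hnorm : ny ^ 2 = (1 + b₂) ^ 2 * r2 ^ 2 - 2 * b₁ * (1 + b₂) * w + b₁ ^ 2 * r1 ^ 2)
    (hkey : (b₁ * ((2 + b₂) - s * L * (1 + b₂))) * w ≤
      ((1 + b₂) - s * L * (1 + b₂) ^ 2 / 2 - s * δ) * r2 ^ 2 +
      (b₁ ^ 2 * (1 - s * L / 2) + s * δ) * r1 ^ 2) :
    gy2 + δ * r2 ^ 2 ≤ gy1 + δ * r1 ^ 2 := by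
  have m := mul_le_mul_of_nonneg_left hdes hs.le
  have e : s * (gy1 + ig + L / 2 * ny ^ 2) =
      s * gy1 + (b₁ * (2 + b₂) * w - b₁ ^ 2 * r1 ^ 2 - (1 + b₂) * r2 ^ 2) +
      s * L / 2 * ((1 + b₂) ^ 2 * r2 ^ 2 - 2 * b₁ * (1 + b₂) * w + b₁ ^ 2 * r1 ^ 2) := by
    linear_combination hinner + (s * L / 2) * hnorm
  rw [e] at m
  have h1 : s * (gy2 + δ * r2 ^ 2) ≤ s * (gy1 + δ * r1 ^ 2) := by nlinarith [m, hkey]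
  exact le_of_mul_le_mul_left h1 hs

lemma my_descent {m : ℕ} (g : EuclideanSpace ℝ (Fin m) → ℝ) (L : ℝ)
    (hdiff : Differentiable ℝ g)
    (hlip : ∀ u v, ‖gradient g u - gradient g v‖ ≤ L * ‖u - v‖)
    (u v : EuclideanSpace ℝ (Fin m)) :
    g u ≤ g v + ⟪gradient g v, u - v⟫ + L / 2 * ‖u - v‖ ^ 2 := by
  set d := u - v with hd
  set ψ : ℝ → ℝ := fun t => g (v + t • d) - t * ⟪gradient g v, d⟫ - L / 2 * t ^ 2 * ‖d‖ ^ 2 with hψdef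
  have hc : ∀ t : ℝ, HasDerivAt (fun t : ℝ => v + t • d) d t := fun t => by
    simpa using ((hasDerivAt_id t).smul_const d).const_add v
  have hφ : ∀ t : ℝ, HasDerivAt (fun t => g (v + t • d)) ⟪gradient g (v + t • d), d⟫ t := by
    intro t
    have h0 := ((hdiff (v + t • d)).hasGradientAt.hasFDerivAt).comp_hasDerivAt t (hc t)
    simpa [InnerProductSpace.toDual_apply_apply, Function.comp_def] using h0
  have hψ' : ∀ t : ℝ, HasDerivAt ψ
      (⟪gradient g (v + t • d), d⟫ - ⟪gradient g v, d⟫ - L * t * ‖d‖ ^ 2) t := by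
    intro t
    have h1 : HasDerivAt (fun t : ℝ => t * ⟪gradient g v, d⟫) ⟪gradient g v, d⟫ t := by
      simpa using (hasDerivAt_id t).mul_const (⟪gradient g v, d⟫ : ℝ)
    have h2 : HasDerivAt (fun t : ℝ => L / 2 * t ^ 2 * ‖d‖ ^ 2) (L * t * ‖d‖ ^ 2) t := by
      have := ((hasDerivAt_pow 2 t).const_mul (L / 2)).mul_const (‖d‖ ^ 2)
      refine this.congr_deriv ?_
      ring
    exact ((hφ t).sub h1).sub h2
  have hanti : AntitoneOn ψ (Set.Icc 0 1) := by
    apply antitoneOn_of_deriv_nonpos (convex_Icc 0 1)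
    · exact fun t _ => (hψ' t).differentiableAt.continuousAt.continuousWithinAt
    · exact fun t _ => (hψ' t).differentiableAt.differentiableWithinAt
    · intro t ht
      rw [interior_Icc] at ht
      rw [(hψ' t).deriv]
      have hb : ⟪gradient g (v + t • d) - gradient g v, d⟫ ≤ L * t * ‖d‖ ^ 2 := by
        calc ⟪gradient g (v + t • d) - gradient g v, d⟫
            ≤ ‖gradient g (v + t • d) - gradient g v‖ * ‖d‖ := real_inner_le_norm _ _
          _ ≤ (L * ‖(v + t • d) - v‖) * ‖d‖ :=
              mul_le_mul_of_nonneg_right (hlip _ _) (norm_nonneg d)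
          _ = L * t * ‖d‖ ^ 2 := by
              rw [add_sub_cancel_left, norm_smul, Real.norm_eq_abs, abs_of_pos ht.1]
              ring
      rw [inner_sub_left] at hb
      linarith
  have key : ψ 1 ≤ ψ 0 :=
    hanti (Set.mem_Icc.2 ⟨le_refl 0, zero_le_one⟩) (Set.mem_Icc.2 ⟨zero_le_one, le_refl 1⟩)
      zero_le_one
  have h0 : ψ 0 = g v := by simp [hψdef]
  have h1 : ψ 1 = g u - ⟪gradient g v, d⟫ - L / 2 * ‖d‖ ^ 2 := by
    simp [hψdef, hd]
  rw [h0, h1] at key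
  linarith

lemma my_step {m : ℕ} (g : EuclideanSpace ℝ (Fin m) → ℝ) (L s δ b₁ b₂ : ℝ)
    (hdiff : Differentiable ℝ g)
    (hlip : ∀ u v, ‖gradient g u - gradient g v‖ ≤ L * ‖u - v‖)
    (hs : 0 < s)
    (x1 x2 x3 : EuclideanSpace ℝ (Fin m)) (y1 y2 : EuclideanSpace ℝ (Fin m))
    (hy1 : y1 = x2 + b₁ • (x2 - x1))
    (hy2 : y2 = x3 + b₂ • (x3 - x2))
    (hstep : x3 = y1 - s • gradient g y1)
    (hA : 0 < (1 + b₂) - s * L * (1 + b₂) ^ 2 / 2 - s * δ)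
    (hquad : (b₁ * ((2 + b₂) - s * L * (1 + b₂))) ^ 2 ≤
      4 * ((1 + b₂) - s * L * (1 + b₂) ^ 2 / 2 - s * δ) * (b₁ ^ 2 * (1 - s * L / 2) + s * δ)) :
    g y2 + δ * ‖x3 - x2‖ ^ 2 ≤ g y1 + δ * ‖x2 - x1‖ ^ 2 := by
  set d := x2 - x1 with hd
  set d' := x3 - x2 with hd'
  set G := gradient g y1 with hG
  clear_value d d' G
  have hsG : s • G = b₁ • d - d' := by
    have hx3 : x3 = x2 + b₁ • d - s • G := by rw [hstep, hy1]
    rw [hd', hx3]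
    abel
  have hΔ : y2 - y1 = (1 + b₂) • d' - b₁ • d := by
    rw [hy2, hy1, add_smul, one_smul, hd']
    abel
  have hdes := my_descent g L hdiff hlip y2 y1
  rw [← hG] at hdes
  have hinner : s * ⟪G, y2 - y1⟫ =
      b₁ * (2 + b₂) * ⟪d, d'⟫ - b₁ ^ 2 * ‖d‖ ^ 2 - (1 + b₂) * ‖d'‖ ^ 2 := by
    rw [← real_inner_smul_left, hsG, hΔ]
    simp only [inner_sub_left, inner_sub_right, real_inner_smul_left, real_inner_smul_right,
      real_inner_self_eq_norm_sq, real_inner_comm d' d, norm_smul, Real.norm_eq_abs,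
      mul_pow, sq_abs]
    ring
  have hnorm : ‖y2 - y1‖ ^ 2 =
      (1 + b₂) ^ 2 * ‖d'‖ ^ 2 - 2 * b₁ * (1 + b₂) * ⟪d, d'⟫ + b₁ ^ 2 * ‖d‖ ^ 2 := by
    rw [← real_inner_self_eq_norm_sq, hΔ]
    simp only [inner_sub_left, inner_sub_right, real_inner_smul_left, real_inner_smul_right,
      real_inner_self_eq_norm_sq, real_inner_comm d' d, norm_smul, Real.norm_eq_abs,
      mul_pow, sq_abs]
    ring
  have hw1 : ⟪d, d'⟫ ≤ ‖d‖ * ‖d'‖ := real_inner_le_norm d d'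
  have hw2 : -(‖d‖ * ‖d'‖) ≤ ⟪d, d'⟫ := neg_le_of_abs_le (abs_real_inner_le_norm d d')
  have hkey := my_quad_bound ((1 + b₂) - s * L * (1 + b₂) ^ 2 / 2 - s * δ)
    (b₁ * ((2 + b₂) - s * L * (1 + b₂))) (b₁ ^ 2 * (1 - s * L / 2) + s * δ)
    ‖d‖ ‖d'‖ ⟪d, d'⟫ hA hquad (norm_nonneg d) (norm_nonneg d') hw1 hw2
  exact my_real_step L s δ b₁ b₂ (g y1) (g y2) ⟪G, y2 - y1⟫ ‖y2 - y1‖ ‖d‖ ‖d'‖ ⟪d, d'⟫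
    hs hdes hinner hnorm hkey

lemma my_limits (βv t sδ : ℝ) (hβ₁ : 0 < βv) (hβ₂ : βv < 1) (ht0 : 0 < t)
    (ht : t < 2 * (1 - βv)) (hsδ : sδ = ((1 + βv - βv ^ 2) - t * (1 + 2 * βv) / 2) / 2) :
    0 < (1 + βv) - t * (1 + βv) ^ 2 / 2 - sδ ∧
    0 < 4 * ((1 + βv) - t * (1 + βv) ^ 2 / 2 - sδ) * (βv ^ 2 * (1 - t / 2) + sδ) -
      (βv * ((2 + βv) - t * (1 + βv))) ^ 2 := by
  have hApos : 0 < (1 + βv) - t * (1 + βv) ^ 2 / 2 - sδ := by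
    rw [hsδ]
    nlinarith [mul_lt_mul_of_pos_right ht (show (0:ℝ) < 1 + 2 * βv + 2 * βv ^ 2 by nlinarith),
      hβ₁, hβ₂, sq_nonneg βv, mul_pos hβ₁ hβ₁]
  refine ⟨hApos, ?_⟩
  have hCeq : βv ^ 2 * (1 - t / 2) + sδ = (1 + βv) - t * (1 + βv) ^ 2 / 2 - sδ := by
    rw [hsδ]; ring
  rw [hCeq]
  have hB : 0 < βv * ((2 + βv) - t * (1 + βv)) := by
    have h := mul_lt_mul_of_pos_right ht (show (0:ℝ) < 1 + βv by linarith)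
    nlinarith [mul_pos hβ₁ hβ₁]
  have h2 : βv * ((2 + βv) - t * (1 + βv)) <
      2 * ((1 + βv) - t * (1 + βv) ^ 2 / 2 - sδ) := by
    rw [hsδ]; nlinarith [ht, ht0]
  nlinarith [hB, h2, hApos]

/-- Under the hypotheses of the inertial algorithm there exist `N` and positive
weights `δₙ` (for `n ≥ N`) such that `g(yₙ) + δₙ‖xₙ - xₙ₋₁‖²` is nonincreasing
from `N` on and convergent.
(Indexing: `x (n+1)` plays the role of `xₙ`, `x 0` that of `x₋₁`.) -/
theorem energy_decreasing {m : ℕ} (g : EuclideanSpace ℝ (Fin m) → ℝ) (L : ℝ)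
    (hdiff : Differentiable ℝ g)
    (hlip : ∀ u v, ‖gradient g u - gradient g v‖ ≤ L * ‖u - v‖)
    (hbdd : BddBelow (Set.range g))
    (β α s : ℝ) (hβ₁ : 0 < β) (hβ₂ : β < 1) (hα : 0 < α)
    (hs₁ : 0 < s) (hs₂ : s < 2 * (1 - β) / L) (hL : 0 < L)
    (x y : ℕ → EuclideanSpace ℝ (Fin m)) (hinit : x 0 = x 1)
    (hy : ∀ n : ℕ, y n = x (n + 1) + ((β * n) / ((n : ℝ) + α)) • (x (n + 1) - x n))
    (hstep : ∀ n : ℕ, x (n + 2) = y n - s • gradient g (y n)) :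
    ∃ N : ℕ, ∃ δ : ℕ → ℝ, (∀ n ≥ N, 0 < δ n) ∧
      (∀ n ≥ N, g (y (n + 1)) + δ (n + 1) * ‖x (n + 2) - x (n + 1)‖ ^ 2 ≤
        g (y n) + δ n * ‖x (n + 1) - x n‖ ^ 2) ∧
      ∃ l : ℝ, Tendsto (fun n => g (y n) + δ n * ‖x (n + 1) - x n‖ ^ 2) atTop (𝓝 l) := by
  -- the step size condition in product form
  have hsL : s * L < 2 * (1 - β) := (lt_div_iff₀ hL).mp hs₂
  have hsL0 : 0 < s * L := mul_pos hs₁ hL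
  -- the constant weight δ
  set δ : ℝ := ((1 + β - β ^ 2) - s * L * (1 + 2 * β) / 2) / (2 * s) with hδdef
  have hnum : 0 < (1 + β - β ^ 2) - s * L * (1 + 2 * β) / 2 := by nlinarith [hsL, hβ₁, hβ₂]
  have hδpos : 0 < δ := div_pos hnum (by linarith)
  have hsδ : s * δ = ((1 + β - β ^ 2) - s * L * (1 + 2 * β) / 2) / 2 := by
    rw [hδdef]; field_simp
  obtain ⟨hAinf, hDinf⟩ := my_limits β (s * L) (s * δ) hβ₁ hβ₂ hsL0 hsL hsδ
  clear_value δ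
  -- the inertial coefficients
  set b : ℕ → ℝ := fun n => β * n / ((n : ℝ) + α) with hbdef
  have hb1 : Tendsto b atTop (𝓝 β) := by
    have h0 : Tendsto (fun n : ℕ => (n : ℝ) / ((n : ℝ) + α)) atTop (𝓝 1) :=
      tendsto_natCast_div_add_atTop α
    have := h0.const_mul β
    simp only [mul_one] at this
    refine this.congr fun n => ?_
    simp [hbdef, mul_div_assoc]
  have hb2 : Tendsto (fun n => b (n + 1)) atTop (𝓝 β) := hb1.comp (tendsto_add_atTop_nat 1)
  clear_value b
  -- eventual positivity of the relevant coefficients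
  have hAt : Tendsto (fun n => (1 + b (n + 1)) - s * L * (1 + b (n + 1)) ^ 2 / 2 - s * δ)
      atTop (𝓝 ((1 + β) - s * L * (1 + β) ^ 2 / 2 - s * δ)) := by
    have hc : Continuous (fun c : ℝ => (1 + c) - s * L * (1 + c) ^ 2 / 2 - s * δ) := by
      fun_prop
    have h := (hc.tendsto β).comp hb2
    simpa [Function.comp_def] using h
  have hDt : Tendsto (fun n =>
      4 * ((1 + b (n + 1)) - s * L * (1 + b (n + 1)) ^ 2 / 2 - s * δ) *
        ((b n) ^ 2 * (1 - s * L / 2) + s * δ) -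
        (b n * ((2 + b (n + 1)) - s * L * (1 + b (n + 1)))) ^ 2) atTop
      (𝓝 (4 * ((1 + β) - s * L * (1 + β) ^ 2 / 2 - s * δ) * (β ^ 2 * (1 - s * L / 2) + s * δ) -
        (β * ((2 + β) - s * L * (1 + β))) ^ 2)) := by
    have hc : Continuous (fun p : ℝ × ℝ =>
        4 * ((1 + p.2) - s * L * (1 + p.2) ^ 2 / 2 - s * δ) * (p.1 ^ 2 * (1 - s * L / 2) + s * δ) -
        (p.1 * ((2 + p.2) - s * L * (1 + p.2))) ^ 2) := by fun_prop
    have h := (hc.tendsto (β, β)).comp (hb1.prodMk_nhds hb2)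
    simpa [Function.comp_def] using h
  have hev : ∀ᶠ n in atTop,
      (0 < (1 + b (n + 1)) - s * L * (1 + b (n + 1)) ^ 2 / 2 - s * δ) ∧
      (0 < 4 * ((1 + b (n + 1)) - s * L * (1 + b (n + 1)) ^ 2 / 2 - s * δ) *
        ((b n) ^ 2 * (1 - s * L / 2) + s * δ) -
        (b n * ((2 + b (n + 1)) - s * L * (1 + b (n + 1)))) ^ 2) :=
    (hAt.eventually (eventually_gt_nhds hAinf)).and (hDt.eventually (eventually_gt_nhds hDinf))
  obtain ⟨N, hN⟩ := eventually_atTop.mp hev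
  -- the decrease property
  have hmono : ∀ n ≥ N, g (y (n + 1)) + δ * ‖x (n + 2) - x (n + 1)‖ ^ 2 ≤
      g (y n) + δ * ‖x (n + 1) - x n‖ ^ 2 := by
    intro n hn
    refine my_step g L s δ (b n) (b (n + 1)) hdiff hlip hs₁ (x n) (x (n + 1)) (x (n + 2))
      (y n) (y (n + 1)) ?_ ?_ (hstep n) (hN n hn).1 (le_of_lt ?_)
    · simpa [hbdef] using hy n
    · simpa [hbdef] using hy (n + 1)
    · linarith [(hN n hn).2]
  -- boundedness below of the energy
  obtain ⟨c, hc⟩ := hbdd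
  set E : ℕ → ℝ := fun n => g (y n) + δ * ‖x (n + 1) - x n‖ ^ 2 with hEdef
  have hEl : ∀ n, c ≤ E n := fun n =>
    le_trans (hc (Set.mem_range_self (y n)))
      (le_add_of_nonneg_right (mul_nonneg hδpos.le (sq_nonneg _)))
  have hant : Antitone (fun k => E (k + N)) := by
    apply antitone_nat_of_succ_le
    intro k
    have hkN : k + 1 + N = (k + N) + 1 := by omega
    rw [hkN]
    exact hmono (k + N) (Nat.le_add_left N k)
  have hbddF : BddBelow (Set.range fun k => E (k + N)) := by
    refine ⟨c, ?_⟩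
    rintro _ ⟨k, rfl⟩
    exact hEl _
  have htF := tendsto_atTop_ciInf hant hbddF
  exact ⟨N, fun _ => δ, fun n _ => hδpos, hmono, ⟨_, (tendsto_add_atTop_iff_nat N).mp htF⟩⟩
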